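/- Let E be a countable directed graph, u,v distinct vertices with an edge f from u to v, and suppose u emits at least two edges. Let G be the graph obtained from E by removing f and adding, for each edge e with r(e) = u, a new edge ē with s(ē) = s(e) and r(ē) = v. Then B_G = B' where B' is obtained from B_E = A_E − I by adding the u'th column into the v'th column. -/

import Mathlib

/-- A countable directed graph. -/
structure DGraph where
  V : Type
  E : Type
  countV : Countable V
  countE : Countable E
  s : E → V
  r : E → V

/-- The adjacency matrix entry: number of edges from `u` to `w`, in `ℕ∞`. -/
noncomputable def DGraph.adj (G : DGraph) (u w : G.V) : ℕ∞ :=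
  {e : G.E | G.s e = u ∧ G.r e = w}.encard

/-- The graph `G` of Lemma 3.1: remove the edge `f` (from `u` to `v`) and add, for each
edge `e` with `r(e) = u`, a new edge `ē` with `s(ē) = s(e)` and `r(ē) = v`. -/
def DGraph.columnAddGraph (G : DGraph) (f : G.E) (u v : G.V) : DGraph where
  V := G.V
  E := {e : G.E // e ≠ f} ⊕ {e : G.E // G.r e = u}
  countV := G.countV
  countE := by haveI := G.countE; exact inferInstance
  s := Sum.elim (fun e => G.s e.1) (fun e => G.s e.1)
  r := Sum.elim (fun e => G.r e.1) (fun _ => v)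


lemma encard_sum {α β : Type*} (S : Set (α ⊕ β)) :
    S.encard = (Sum.inl ⁻¹' S).encard + (Sum.inr ⁻¹' S).encard := by
  have h1 := (Sum.inl_injective (α := α) (β := β)).encard_image (Sum.inl ⁻¹' S)
  have h2 := (Sum.inr_injective (α := α) (β := β)).encard_image (Sum.inr ⁻¹' S)
  have hS : S = Sum.inl '' (Sum.inl ⁻¹' S) ∪ Sum.inr '' (Sum.inr ⁻¹' S) := by
    ext z; cases z <;> simp
  have hd : Disjoint (Sum.inl '' (Sum.inl ⁻¹' S) : Set (α ⊕ β)) (Sum.inr '' (Sum.inr ⁻¹' S)) := by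
    rw [Set.disjoint_iff_inter_eq_empty]; ext z; cases z <;> simp
  conv_lhs => rw [hS]
  rw [Set.encard_union_eq hd, h1, h2]

lemma encard_subtype {α : Type*} {Q : α → Prop} (S : Set {a // Q a}) :
    S.encard = (Subtype.val '' S).encard :=
  (Subtype.val_injective.encard_image _).symm

open Classical in
/-- `B_G = B'`, where `B'` is obtained from `B_E = A_E - I` by adding the `u`'th column
into the `v`'th column.  Since `B = A - I`, this is equivalent to the subtraction-free
identity `A_G(w,x) + [w = u ∧ x = v] = A_E(w,x) + [x = v]·A_E(w,u)` for all `w, x`. -/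
theorem columnAddGraph_adj (G : DGraph) (u v : G.V) (huv : u ≠ v)
    (f : G.E) (hf : G.s f = u ∧ G.r f = v)
    (htwo : 2 ≤ {e : G.E | G.s e = u}.encard) :
    ∀ w x : G.V,
      (G.columnAddGraph f u v).adj w x + (if w = u ∧ x = v then 1 else 0) =
        G.adj w x + (if x = v then G.adj w u else 0) := by
  classical
  intro w x
  have hsplit : (G.columnAddGraph f u v).adj w x =
      ({e : G.E | (G.s e = w ∧ G.r e = x) ∧ e ≠ f}).encard +
      ({e : G.E | (G.s e = w ∧ v = x) ∧ G.r e = u}).encard := by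
    unfold DGraph.adj
    erw [encard_sum, encard_subtype (Q := fun e => e ≠ f),
      encard_subtype (Q := fun e => G.r e = u)]
    congr 1
    · congr 1
      ext e
      simp only [DGraph.columnAddGraph, Set.mem_image, Set.mem_preimage, Set.mem_setOf_eq,
        Sum.elim_inl, Subtype.exists, exists_and_left, exists_prop]
      aesop
    · congr 1
      ext e
      simp only [DGraph.columnAddGraph, Set.mem_image, Set.mem_preimage, Set.mem_setOf_eq,
        Sum.elim_inr, Subtype.exists, exists_and_left, exists_prop]
      aesop
  rw [hsplit]
  by_cases hx : x = v
  · subst hx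
    simp only [eq_self_iff_true, and_true, if_true]
    have h2 : ({e : G.E | G.s e = w ∧ G.r e = u}).encard = G.adj w u := rfl
    rw [h2]
    by_cases hw : w = u
    · subst hw
      have hmem : f ∈ {e : G.E | G.s e = w ∧ G.r e = x} := hf
      have hdiff : {e : G.E | (G.s e = w ∧ G.r e = x) ∧ e ≠ f} =
          {e : G.E | G.s e = w ∧ G.r e = x} \ {f} := by
        ext e; simp only [Set.mem_setOf_eq, Set.mem_diff, Set.mem_singleton_iff]
      rw [hdiff, add_right_comm, if_pos rfl, Set.encard_diff_singleton_add_one hmem]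
      rfl
    · simp only [if_neg hw, add_zero]
      have h1 : {e : G.E | (G.s e = w ∧ G.r e = x) ∧ e ≠ f} =
          {e : G.E | G.s e = w ∧ G.r e = x} := by
        ext e
        simp only [Set.mem_setOf_eq, and_iff_left_iff_imp]
        rintro ⟨h1, -⟩ rfl
        exact hw (h1 ▸ hf.1.symm ▸ rfl)
      rw [h1]; rfl
  · have hxv : ¬ (w = u ∧ x = v) := fun h => hx h.2
    simp only [if_neg hx, if_neg hxv, add_zero]
    have h2 : ({e : G.E | (G.s e = w ∧ v = x) ∧ G.r e = u}).encard = 0 := by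
      rw [Set.encard_eq_zero]
      ext e
      simp only [Set.mem_setOf_eq, Set.mem_empty_iff_false, iff_false]
      rintro ⟨⟨-, h⟩, -⟩; exact hx h.symm
    have h1 : {e : G.E | (G.s e = w ∧ G.r e = x) ∧ e ≠ f} =
        {e : G.E | G.s e = w ∧ G.r e = x} := by
      ext e
      simp only [Set.mem_setOf_eq, and_iff_left_iff_imp]
      rintro ⟨-, h⟩ rfl
      exact hx (h ▸ hf.2)
    rw [h1, h2, add_zero]; rfl
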